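/- Let k1V, k2, κ, γ > 0 and define x̄2 = k1V·(γ+k2)/(γ·k2), x̄1 = x̄2 + k1V/κ, and x̄3 = k1V/k2. Define π(x1,x2,x3) = Π_{j=1}^{3} e^(−x̄j) x̄j^{x_j}/x_j! for (x1,x2,x3) ∈ ℕ³. Then π satisfies the stationary master equation of the three-species linear system: for every (x1,x2,x3) ∈ ℕ³, (k1V + k2·x3 + κ·x1 + κ·x2 + γ·x2 + γ·x3)·π(x1,x2,x3) = k1V·π(x1−1,x2,x3) + k2·(x3+1)·π(x1,x2,x3+1) + κ·(x1+1)·π(x1+1,x2−1,x3) + κ·(x2+1)·π(x1−1,x2+1,x3) + γ·(x2+1)·π(x1,x2+1,x3−1) + γ·(x3+1)·π(x1,x2−1,x3+1), where any term whose argument has a negative coordinate is zero. Hence the product of independent Poissons with means (x̄1, x̄2, x̄3) is the invariant distribution of the three-species linear system. -/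

import Mathlib

/-- The product of independent Poisson distributions with means
`x̄1 = k1V(γ+k2)/(γk2) + k1V/κ`, `x̄2 = k1V(γ+k2)/(γk2)`, `x̄3 = k1V/k2`
satisfies the stationary master equation of the three-species linear system.
Terms whose argument would have a negative coordinate are zero. -/
theorem product_poisson_invariant_three_species_system
    (k1V k2 kappa gamma : ℝ)
    (h1 : 0 < k1V) (h2 : 0 < k2) (hk : 0 < kappa) (hg : 0 < gamma)
    (x2bar x1bar x3bar : ℝ)
    (hx2 : x2bar = k1V * (gamma + k2) / (gamma * k2))
    (hx1 : x1bar = x2bar + k1V / kappa)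
    (hx3 : x3bar = k1V / k2)
    (pi : ℕ → ℕ → ℕ → ℝ)
    (hpi : ∀ x1 x2 x3 : ℕ, pi x1 x2 x3 =
      (Real.exp (-x1bar) * x1bar ^ x1 / x1.factorial) *
        (Real.exp (-x2bar) * x2bar ^ x2 / x2.factorial) *
        (Real.exp (-x3bar) * x3bar ^ x3 / x3.factorial)) :
    ∀ x1 x2 x3 : ℕ,
      (k1V + k2 * x3 + kappa * x1 + kappa * x2 + gamma * x2 + gamma * x3) *
          pi x1 x2 x3 =
        k1V * (if x1 = 0 then 0 else pi (x1 - 1) x2 x3) +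
          k2 * (x3 + 1) * pi x1 x2 (x3 + 1) +
          kappa * (x1 + 1) * (if x2 = 0 then 0 else pi (x1 + 1) (x2 - 1) x3) +
          kappa * (x2 + 1) * (if x1 = 0 then 0 else pi (x1 - 1) (x2 + 1) x3) +
          gamma * (x2 + 1) * (if x3 = 0 then 0 else pi x1 (x2 + 1) (x3 - 1)) +
          gamma * (x3 + 1) * (if x2 = 0 then 0 else pi x1 (x2 - 1) (x3 + 1)) := by
  have hg' := hg.ne'
  have h2' := h2.ne'
  have hk' := hk.ne'
  have hfac : ∀ n : ℕ, ((n.factorial : ℝ)) ≠ 0 := fun n =>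
    Nat.cast_ne_zero.mpr n.factorial_ne_zero
  -- step lemmas
  have sA : ∀ i j k : ℕ, ((i : ℝ) + 1) * pi (i + 1) j k = x1bar * pi i j k := by
    intro i j k
    simp only [hpi, Nat.factorial_succ, pow_succ]
    push_cast
    field_simp
  have sB : ∀ i j k : ℕ, ((j : ℝ) + 1) * pi i (j + 1) k = x2bar * pi i j k := by
    intro i j k
    simp only [hpi, Nat.factorial_succ, pow_succ]
    push_cast
    field_simp
  have sC : ∀ i j k : ℕ, ((k : ℝ) + 1) * pi i j (k + 1) = x3bar * pi i j k := by
    intro i j k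
    simp only [hpi, Nat.factorial_succ, pow_succ]
    push_cast
    field_simp
  -- scalar identities
  have hI : k2 * x3bar = k1V := by rw [hx3]; field_simp
  have hII : kappa * x1bar = k1V + kappa * x2bar := by rw [hx1]; field_simp; ring
  have hIII : (kappa + gamma) * x2bar = kappa * x1bar + gamma * x3bar := by
    rw [hx1, hx2, hx3]; field_simp; ring
  have hIV : (k2 + gamma) * x3bar = gamma * x2bar := by
    rw [hx2, hx3]; field_simp; ring
  intro x1 x2 x3
  have B1 : k1V * pi x1 x2 x3 = k2 * ((x3 : ℝ) + 1) * pi x1 x2 (x3 + 1) := by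
    have := sC x1 x2 x3
    linear_combination -k2 * this - pi x1 x2 x3 * hI
  have B2 : kappa * (x1 : ℝ) * pi x1 x2 x3 =
      k1V * (if x1 = 0 then 0 else pi (x1 - 1) x2 x3) +
        kappa * ((x2 : ℝ) + 1) * (if x1 = 0 then 0 else pi (x1 - 1) (x2 + 1) x3) := by
    rcases x1 with _ | n
    · simp
    · simp only [Nat.succ_ne_zero, if_false, Nat.succ_sub_one]
      have e2 := sA n x2 x3
      have e3 := sB n x2 x3
      push_cast
      linear_combination kappa * e2 - kappa * e3 + pi n x2 x3 * hII
  have B3 : (kappa + gamma) * (x2 : ℝ) * pi x1 x2 x3 =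
      kappa * ((x1 : ℝ) + 1) * (if x2 = 0 then 0 else pi (x1 + 1) (x2 - 1) x3) +
        gamma * ((x3 : ℝ) + 1) * (if x2 = 0 then 0 else pi x1 (x2 - 1) (x3 + 1)) := by
    rcases x2 with _ | m
    · simp
    · simp only [Nat.succ_ne_zero, if_false, Nat.succ_sub_one]
      have e5 := sB x1 m x3
      have e4 := sA x1 m x3
      have e8 := sC x1 m x3
      push_cast
      linear_combination (kappa + gamma) * e5 - kappa * e4 - gamma * e8 +
        pi x1 m x3 * hIII
  have B4 : (k2 + gamma) * (x3 : ℝ) * pi x1 x2 x3 =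
      gamma * ((x2 : ℝ) + 1) * (if x3 = 0 then 0 else pi x1 (x2 + 1) (x3 - 1)) := by
    rcases x3 with _ | r
    · simp
    · simp only [Nat.succ_ne_zero, if_false, Nat.succ_sub_one]
      have e7 := sC x1 x2 r
      have e6 := sB x1 x2 r
      push_cast
      linear_combination (k2 + gamma) * e7 - gamma * e6 + pi x1 x2 r * hIV
  linear_combination B1 + B2 + B3 + B4
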